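/- Let f : A → B be an F-equivalence of finitely generated F_p-algebras. Then there exist a ring homomorphism g : B → A and n ≥ 0 such that g ∘ f = F^n on A and f ∘ g = F^n on B, where F denotes the absolute Frobenius. -/

import Mathlib

open MvPolynomial

section Helpers

variable (p : ℕ) [Fact p.Prime]

/-- Any ring hom between `ZMod p`-algebras is automatically a `ZMod p`-algebra hom. -/
private def zmodToAlg {R S : Type*} [CommRing R] [CommRing S] [Algebra (ZMod p) R]
    [Algebra (ZMod p) S] (φ : R →+* S) : R →ₐ[ZMod p] S :=
  AlgHom.mk φ fun c => RingHom.congr_fun (RingHom.ext_zmod (φ.comp (algebraMap (ZMod p) R)) (algebraMap (ZMod p) S)) c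

@[simp] private lemma zmodToAlg_apply {R S : Type*} [CommRing R] [CommRing S]
    [Algebra (ZMod p) R] [Algebra (ZMod p) S] (φ : R →+* S) (x : R) :
    zmodToAlg p φ x = φ x := rfl

/-- Evaluating a polynomial over `𝔽_p` at `p^n`-th powers gives the `p^n`-th power of
the evaluation. -/
private lemma aeval_pow_char {σ R : Type*} [CommRing R] [Algebra (ZMod p) R] [CharP R p]
    (v : σ → R) (n : ℕ) (r : MvPolynomial σ (ZMod p)) :
    aeval (fun i => v i ^ p ^ n) r = (aeval v r) ^ p ^ n := by
  have h : (zmodToAlg p (iterateFrobenius R p n)).comp (aeval v) =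
      aeval (fun i => v i ^ p ^ n) := by
    rw [comp_aeval]
    congr 1
  exact (AlgHom.congr_fun h r).symm

end Helpers

/-- An `F`-equivalence of finitely generated `𝔽_p`-algebras admits an "inverse up to
Frobenius": a ring map `g : B → A` with `g ∘ f = F^n` and `f ∘ g = F^n`. -/
theorem stmt1 (p : ℕ) [Fact p.Prime] {A B : Type*} [CommRing A] [CommRing B]
    [Algebra (ZMod p) A] [Algebra (ZMod p) B]
    [Algebra.FiniteType (ZMod p) A] [Algebra.FiniteType (ZMod p) B]
    (f : A →+* B)
    (hinj : ∀ x : A, f x = 0 → ∃ m : ℕ, x ^ p ^ m = 0)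
    (hsurj : ∀ y : B, ∃ (m : ℕ) (x : A), f x = y ^ p ^ m) :
    ∃ (g : B →+* A) (n : ℕ),
      (∀ a : A, g (f a) = a ^ p ^ n) ∧ (∀ b : B, f (g b) = b ^ p ^ n) := by
  classical
  rcases subsingleton_or_nontrivial A with hA | hA
  · -- trivial case: A (hence B) is the zero ring
    haveI : Subsingleton B := by
      refine subsingleton_of_zero_eq_one ?_
      calc (0 : B) = f 0 := (map_zero f).symm
        _ = f 1 := by rw [Subsingleton.elim (0 : A) 1]
        _ = 1 := map_one f
    refine ⟨⟨⟨⟨fun _ => (0 : A), ?_⟩, ?_⟩, ?_, ?_⟩, 0, ?_, ?_⟩ <;>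
      intros <;> exact Subsingleton.elim _ _
  haveI : Nontrivial B := by
    rcases subsingleton_or_nontrivial B with hB | hB
    · exfalso
      obtain ⟨m, hm⟩ := hinj 1 (Subsingleton.elim _ _)
      rw [one_pow] at hm
      exact one_ne_zero hm
    · exact hB
  haveI : CharP A p := charP_of_injective_ringHom (algebraMap (ZMod p) A).injective p
  haveI : CharP B p := charP_of_injective_ringHom (algebraMap (ZMod p) B).injective p
  -- present B as a quotient of a polynomial ring
  obtain ⟨k, π, hπ⟩ := Algebra.FiniteType.iff_quotient_mvPolynomial''.mp
    ‹Algebra.FiniteType (ZMod p) B›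
  set y : Fin k → B := fun i => π (X i) with hy
  -- lift the generators up to a uniform Frobenius power
  choose mf xf hxf using fun i => hsurj (y i)
  set m : ℕ := Finset.univ.sup mf with hm
  set x' : Fin k → A := fun i => xf i ^ p ^ (m - mf i) with hx'
  have hfx' : ∀ i, f (x' i) = y i ^ p ^ m := by
    intro i
    have hle : mf i ≤ m := Finset.le_sup (Finset.mem_univ i)
    rw [hx']
    simp only [map_pow, hxf i, ← pow_mul, ← pow_add, Nat.add_sub_cancel' hle]
  have hπ_aeval : ∀ r : MvPolynomial (Fin k) (ZMod p), π r = aeval y r := by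
    intro r
    conv_lhs => rw [MvPolynomial.aeval_unique π]
    rfl
  -- the "naive section" ψ of f up to Frobenius
  set ψ : MvPolynomial (Fin k) (ZMod p) →ₐ[ZMod p] A := aeval x' with hψ
  have hfψ : ∀ r : MvPolynomial (Fin k) (ZMod p), f (ψ r) = (π r) ^ p ^ m := by
    intro r
    rw [hψ, ← zmodToAlg_apply p f, comp_aeval_apply]
    simp only [zmodToAlg_apply, hfx']
    rw [aeval_pow_char, hπ_aeval]
  -- kill finitely many relations
  obtain ⟨s, hs⟩ := (IsNoetherian.noetherian (R := MvPolynomial (Fin k) (ZMod p))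
    (RingHom.ker π.toRingHom))
  set lf : MvPolynomial (Fin k) (ZMod p) → ℕ := fun r =>
    if h : f (ψ r) = 0 then (hinj _ h).choose else 0 with hlf
  set l : ℕ := s.sup lf with hl
  have hkill : ∀ r ∈ (s : Set (MvPolynomial (Fin k) (ZMod p))), (ψ r) ^ p ^ l = 0 := by
    intro r hr
    have hrker : π r = 0 := by
      have : r ∈ RingHom.ker π.toRingHom := by
        rw [← hs]; exact Submodule.subset_span hr
      exact this
    have h0 : f (ψ r) = 0 := by rw [hfψ, hrker, zero_pow (pow_ne_zero _ (Fact.out : p.Prime).ne_zero)]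
    have hch : (ψ r) ^ p ^ (lf r) = 0 := by
      rw [hlf]; simp only [h0, dif_pos]
      exact (hinj _ h0).choose_spec
    have hle : lf r ≤ l := Finset.le_sup hr
    calc (ψ r) ^ p ^ l = ((ψ r) ^ p ^ (lf r)) ^ p ^ (l - lf r) := by
          rw [← pow_mul, ← pow_add, Nat.add_sub_cancel' hle]
      _ = 0 := by rw [hch, zero_pow (pow_ne_zero _ (Fact.out : p.Prime).ne_zero)]
  -- the algebra hom killing the relation ideal
  set φ : MvPolynomial (Fin k) (ZMod p) →ₐ[ZMod p] A := aeval (fun i => x' i ^ p ^ l) with hφ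
  have hφψ : ∀ r, φ r = (ψ r) ^ p ^ l := by
    intro r; rw [hφ, hψ, aeval_pow_char]
  have hker : RingHom.ker π.toRingHom ≤ RingHom.ker φ.toRingHom := by
    rw [← hs, Submodule.span_le]
    intro r hr
    show φ r = 0
    rw [hφψ]; exact hkill r hr
  -- build g₀ : B →+* A
  set e := RingHom.quotientKerEquivOfSurjective (f := π.toRingHom) hπ with he
  set g₀ : B →+* A :=
    (Ideal.Quotient.lift (RingHom.ker π.toRingHom) φ.toRingHom (fun a ha => (RingHom.mem_ker).mp (hker ha))).comp
      (e.symm : B →+* (MvPolynomial (Fin k) (ZMod p) ⧸ RingHom.ker π.toRingHom)) with hg₀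
  set n₀ : ℕ := m + l with hn₀
  have hg₀π : ∀ r, g₀ (π r) = φ r := by
    intro r
    have hesymm : e.symm (π r) = Ideal.Quotient.mk (RingHom.ker π.toRingHom) r := by
      have h1 : e (Ideal.Quotient.mk (RingHom.ker π.toRingHom) r) = π r :=
        RingHom.kerLift_mk π.toRingHom r
      rw [← h1, RingEquiv.symm_apply_apply]
    rw [hg₀]
    simp only [RingHom.coe_comp, Function.comp_apply, RingEquiv.coe_toRingHom]
    rw [hesymm, Ideal.Quotient.lift_mk]
    rfl
  have hfg₀ : ∀ b : B, f (g₀ b) = b ^ p ^ n₀ := by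
    intro b
    obtain ⟨r, rfl⟩ := hπ b
    rw [hg₀π, hφψ, map_pow, hfψ, ← pow_mul, ← pow_add, hn₀]
  -- now correct on the A side
  obtain ⟨k', ρ, hρ⟩ := Algebra.FiniteType.iff_quotient_mvPolynomial''.mp
    ‹Algebra.FiniteType (ZMod p) A›
  set a : Fin k' → A := fun j => ρ (X j) with ha
  have hfg₀f : ∀ j, f (g₀ (f (a j)) - (a j) ^ p ^ n₀) = 0 := by
    intro j
    rw [map_sub, hfg₀, map_pow, sub_self]
  choose sf hsf using fun j => hinj _ (hfg₀f j)
  set s' : ℕ := Finset.univ.sup sf with hs'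
  have hgen : ∀ j, (g₀ (f (a j))) ^ p ^ s' = (a j) ^ p ^ (n₀ + s') := by
    intro j
    have hle : sf j ≤ s' := Finset.le_sup (Finset.mem_univ j)
    have h0 : (g₀ (f (a j)) - (a j) ^ p ^ n₀) ^ p ^ s' = 0 := by
      calc (g₀ (f (a j)) - (a j) ^ p ^ n₀) ^ p ^ s'
          = ((g₀ (f (a j)) - (a j) ^ p ^ n₀) ^ p ^ (sf j)) ^ p ^ (s' - sf j) := by
            rw [← pow_mul, ← pow_add, Nat.add_sub_cancel' hle]
        _ = 0 := by rw [hsf j, zero_pow (pow_ne_zero _ (Fact.out : p.Prime).ne_zero)]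
    rw [sub_pow_char_pow] at h0
    have := sub_eq_zero.mp h0
    rw [this, ← pow_mul, ← pow_add]
  -- final data
  set g : B →+* A := (iterateFrobenius A p s').comp g₀ with hg
  refine ⟨g, n₀ + s', ?_, ?_⟩
  · -- g ∘ f = F^(n₀+s') via generators of A
    have key : (zmodToAlg p (g.comp f)).comp ρ =
        (zmodToAlg p (iterateFrobenius A p (n₀ + s'))).comp ρ := by
      apply MvPolynomial.algHom_ext
      intro j
      simp only [AlgHom.comp_apply, zmodToAlg_apply, RingHom.comp_apply]
      rw [hg]
      simp only [RingHom.comp_apply, iterateFrobenius_def]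
      exact hgen j
    intro a₀
    obtain ⟨r, rfl⟩ := hρ a₀
    have := AlgHom.congr_fun key r
    simpa [iterateFrobenius_def] using this
  · intro b
    rw [hg]
    simp only [RingHom.comp_apply, iterateFrobenius_def]
    rw [map_pow, hfg₀, ← pow_mul, ← pow_add]
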